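/- Let a, b ∈ ℝ with |a − b| ≤ 1 and set t₀ = a − b + 1 (so 0 ≤ t₀ ≤ 2). Define K = {(α,β) ∈ ℝ² : |β − α| ≤ 1}, f = (0,1) ∈ ℝ², and u : [0,∞) → ℝ² by u(t) = (a, b + t) for 0 ≤ t ≤ t₀ and u(t) = (a + (t−t₀)/2, b + t₀ + (t−t₀)/2) for t ≥ t₀. Then: (i) u(0) = (a,b); (ii) u is continuous on [0,∞); (iii) u(t) ∈ K for every t ≥ 0; (iv) for every t > 0 with t ≠ t₀, u is differentiable at t and ⟨f − u'(t), w − u(t)⟩ ≤ 0 for every w ∈ K, where ⟨·,·⟩ is the Euclidean inner product on ℝ². -/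

import Mathlib

open scoped RealInnerProductSpace

/-- The constraint set `K = {(α,β) ∈ ℝ² : |β - α| ≤ 1}`, viewed in `ℝ²` with the Euclidean
inner product. -/
noncomputable def sandpileK : Set (EuclideanSpace ℝ (Fin 2)) :=
  {w | |w 1 - w 0| ≤ 1}

/-- The source `f = (0,1)`. -/
noncomputable def sandpileF : EuclideanSpace ℝ (Fin 2) := !₂[0, 1]

/-- The explicit solution of Example 2 with initial data `(a,b)` and switching time
`t₀ = a - b + 1`: `u(t) = (a, b + t)` for `0 ≤ t ≤ t₀` and
`u(t) = (a + (t - t₀)/2, b + t₀ + (t - t₀)/2)` for `t ≥ t₀`. -/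
noncomputable def sandpileU (a b : ℝ) : ℝ → EuclideanSpace ℝ (Fin 2) := fun t =>
  if t ≤ a - b + 1 then !₂[a, b + t]
  else !₂[a + (t - (a - b + 1)) / 2, b + (a - b + 1) + (t - (a - b + 1)) / 2]

noncomputable def v2 (x y : ℝ) : EuclideanSpace ℝ (Fin 2) := !₂[x, y]

@[simp] lemma v2_zero (x y : ℝ) : v2 x y 0 = x := rfl
@[simp] lemma v2_one (x y : ℝ) : v2 x y 1 = y := rfl

lemma contPair (f g : ℝ → ℝ) (hf : Continuous f) (hg : Continuous g) :
    Continuous fun t => (!₂[f t, g t] : EuclideanSpace ℝ (Fin 2)) := by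
  apply (PiLp.continuous_toLp 2 _).comp
  apply continuous_pi
  intro i; fin_cases i <;> simpa

lemma hd1 (a b t : ℝ) :
    HasDerivAt (fun t : ℝ => v2 a (b + t)) (v2 0 1) t := by
  have : (fun t : ℝ => v2 a (b + t)) = fun t : ℝ => v2 a b + t • v2 0 1 := by
    funext t; ext i; fin_cases i <;>
      simp [v2, PiLp.add_apply, PiLp.smul_apply]
  rw [this]
  simpa using ((hasDerivAt_id t).smul_const (v2 0 1)).const_add (v2 a b)

lemma hd2 (a b t : ℝ) :
    HasDerivAt (fun t : ℝ => v2 (a + (t - (a - b + 1)) / 2)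
      (b + (a - b + 1) + (t - (a - b + 1)) / 2)) (v2 (1/2) (1/2)) t := by
  have : (fun t : ℝ => v2 (a + (t - (a - b + 1)) / 2) (b + (a - b + 1) + (t - (a - b + 1)) / 2))
      = fun t : ℝ => v2 (a - (a-b+1)/2) (b + (a-b+1) - (a-b+1)/2) + t • v2 (1/2) (1/2) := by
    funext t; ext i; fin_cases i <;>
      simp [v2, PiLp.add_apply, PiLp.smul_apply] <;> ring
  rw [this]
  simpa using ((hasDerivAt_id t).smul_const (v2 (1/2) (1/2))).const_add
    (v2 (a - (a-b+1)/2) (b + (a-b+1) - (a-b+1)/2))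

theorem statement8 (a b : ℝ) (hab : |a - b| ≤ 1) :
    (0 ≤ a - b + 1 ∧ a - b + 1 ≤ 2) ∧
    sandpileU a b 0 = ![a, b] ∧
    ContinuousOn (sandpileU a b) (Set.Ici (0 : ℝ)) ∧
    (∀ t : ℝ, 0 ≤ t → sandpileU a b t ∈ sandpileK) ∧
    (∀ t : ℝ, 0 < t → t ≠ a - b + 1 →
      DifferentiableAt ℝ (sandpileU a b) t ∧
      ∀ w ∈ sandpileK, ⟪sandpileF - deriv (sandpileU a b) t, w - sandpileU a b t⟫ ≤ 0) := by
  rw [abs_le] at hab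
  obtain ⟨hab1, hab2⟩ := hab
  refine ⟨⟨by linarith, by linarith⟩, ?_, ?_, ?_, ?_⟩
  · have h0 : (0:ℝ) ≤ a - b + 1 := by linarith
    simp [sandpileU, h0]
  · apply Continuous.continuousOn
    unfold sandpileU
    apply Continuous.if_le
    · exact contPair _ _ continuous_const (by fun_prop)
    · exact contPair _ _ (by fun_prop) (by fun_prop)
    · exact continuous_id
    · exact continuous_const
    · intro x hx
      subst hx
      ext i; fin_cases i <;> simp <;> ring
  · intro t ht
    unfold sandpileU sandpileK
    by_cases h : t ≤ a - b + 1
    · rw [if_pos h]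
      simp only [Set.mem_setOf_eq, Matrix.cons_val_one, Matrix.head_cons, Matrix.cons_val_zero]
      rw [abs_le]; constructor <;> linarith
    · rw [if_neg h]
      simp only [Set.mem_setOf_eq, Matrix.cons_val_one, Matrix.head_cons, Matrix.cons_val_zero]
      rw [abs_le]; constructor <;> [linarith; nlinarith]
  · intro t ht hne
    rcases lt_or_gt_of_ne hne with hlt | hgt
    · have heq : sandpileU a b =ᶠ[nhds t] fun t => (!₂[a, b + t] : EuclideanSpace ℝ (Fin 2)) := by
        filter_upwards [Iio_mem_nhds hlt] with x hx
        simp [sandpileU, (Set.mem_Iio.mp hx).le]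
      have hder : HasDerivAt (sandpileU a b) (!₂[0,1] : EuclideanSpace ℝ (Fin 2)) t :=
        (hd1 a b t).congr_of_eventuallyEq heq
      refine ⟨hder.differentiableAt, ?_⟩
      intro w hw
      rw [hder.deriv, PiLp.inner_apply]
      simp [sandpileF, v2, Fin.sum_univ_two, PiLp.sub_apply]
    · have heq : sandpileU a b =ᶠ[nhds t] fun t => (!₂[a + (t - (a - b + 1)) / 2,
          b + (a - b + 1) + (t - (a - b + 1)) / 2] : EuclideanSpace ℝ (Fin 2)) := by
        filter_upwards [Ioi_mem_nhds hgt] with x hx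
        simp [sandpileU, not_le.mpr (Set.mem_Ioi.mp hx)]
      have hder : HasDerivAt (sandpileU a b) (!₂[1/2,1/2] : EuclideanSpace ℝ (Fin 2)) t :=
        (hd2 a b t).congr_of_eventuallyEq heq
      refine ⟨hder.differentiableAt, ?_⟩
      intro w hw
      rw [hder.deriv]
      have hu : sandpileU a b t = v2 (a + (t - (a - b + 1)) / 2)
          (b + (a - b + 1) + (t - (a - b + 1)) / 2) := by
        simp [sandpileU, v2, not_le.mpr hgt]
      rw [hu]
      have hw' : w 1 - w 0 ≤ 1 := (abs_le.mp hw).2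
      rw [PiLp.inner_apply]
      simp only [Fin.sum_univ_two, PiLp.sub_apply, sandpileF, v2_zero, v2_one,
        Matrix.cons_val_zero, Matrix.cons_val_one, Matrix.head_cons, RCLike.inner_apply,
        conj_trivial]
      ring_nf
      nlinarith [hw']
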